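/- arXiv:1909.11948 — 2 statements merged into one kernel-verified Lean document; each statement's English description precedes it below -/
import Mathlib

section
/- Let X be a square-integrable random vector in ℝᵖ and Y a random variable such that E[X | BᵀX, Y] = E[X | BᵀX] almost surely (conditional independence of Y and X given BᵀX at the level of first moments), and suppose E[X | BᵀX] = Pᵀ X almost surely for a fixed matrix P with P = B(BᵀΣB)⁻¹BᵀΣ where Σ = Cov(X). Then Σ⁻¹(E[X|Y] − E[X]) = P · Σ⁻¹(E[X|Y] − E[X]) almost surely. -/
open Matrix MeasureTheory

lemma condexp_clm_comm {α E F : Type*} {m m0 : MeasurableSpace α} {μ : Measure α}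
    [IsFiniteMeasure μ]
    [NormedAddCommGroup E] [NormedSpace ℝ E] [CompleteSpace E]
    [NormedAddCommGroup F] [NormedSpace ℝ F] [CompleteSpace F]
    (hm : m ≤ m0) (L : E →L[ℝ] F) {f : α → E} (hf : Integrable f μ) :
    μ[(fun ω => L (f ω))|m] =ᵐ[μ] fun ω => L ((μ[f|m]) ω) := by
  refine (ae_eq_condExp_of_forall_setIntegral_eq hm (L.integrable_comp hf)
    (fun s _ _ => (L.integrable_comp integrable_condExp).integrableOn)
    (fun s hs hμs => ?_) ?_).symm
  · rw [L.integral_comp_comm integrable_condExp.integrableOn,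
      setIntegral_condExp hm hf hs, ← L.integral_comp_comm hf.integrableOn]
  · exact (L.continuous.comp_stronglyMeasurable (stronglyMeasurable_condExp (m := m))).aestronglyMeasurable

lemma key_mat {p d : ℕ} (S : Matrix (Fin p) (Fin p) ℝ) (hSsymm : Sᵀ = S)
    (hSu : IsUnit S.det) (B : Matrix (Fin p) (Fin d) ℝ) :
    S⁻¹ * (B * (Bᵀ * S * B)⁻¹ * Bᵀ * S)ᵀ = (B * (Bᵀ * S * B)⁻¹ * Bᵀ * S) * S⁻¹ := by
  have hC : ((Bᵀ * S * B)⁻¹)ᵀ = (Bᵀ * S * B)⁻¹ := by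
    rw [transpose_nonsing_inv, transpose_mul, transpose_mul, transpose_transpose, hSsymm,
      Matrix.mul_assoc]
  have h1 : (B * (Bᵀ * S * B)⁻¹ * Bᵀ * S)ᵀ = S * (B * (Bᵀ * S * B)⁻¹ * Bᵀ) := by
    rw [transpose_mul, transpose_mul, transpose_mul, transpose_transpose, hC, hSsymm,
      Matrix.mul_assoc, Matrix.mul_assoc]
  rw [h1, ← Matrix.mul_assoc, Matrix.nonsing_inv_mul S hSu, Matrix.one_mul,
    Matrix.mul_assoc (B * (Bᵀ * S * B)⁻¹ * Bᵀ) S S⁻¹, Matrix.mul_nonsing_inv S hSu,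
    Matrix.mul_one]

/-- with `Σ = Cov(X)` positive definite, `P = B (Bᵀ Σ B)⁻¹ Bᵀ Σ`,
assuming `E[X | BᵀX, Y] = E[X | BᵀX]` a.s. and `E[X | BᵀX] = Pᵀ X` a.s., one has
`Σ⁻¹ (E[X|Y] - E[X]) = P Σ⁻¹ (E[X|Y] - E[X])` almost surely. -/
theorem stmt5 {Ω 𝓨 : Type*} [MeasurableSpace Ω] [MeasurableSpace 𝓨]
    {μ : Measure Ω} [IsProbabilityMeasure μ]
    {p d : ℕ} (X : Ω → Fin p → ℝ) (Y : Ω → 𝓨)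
    (hXm : Measurable X) (hYm : Measurable Y)
    (hX2 : ∀ i, MemLp (fun ω => X ω i) 2 μ)
    (S : Matrix (Fin p) (Fin p) ℝ)
    (hS : S = Matrix.of fun i j =>
      ∫ ω, (X ω i - ∫ ω', X ω' i ∂μ) * (X ω j - ∫ ω', X ω' j ∂μ) ∂μ)
    (hSpd : S.PosDef)
    (B : Matrix (Fin p) (Fin d) ℝ) (hB : B.rank = d)
    (P : Matrix (Fin p) (Fin p) ℝ) (hP : P = B * (Bᵀ * S * B)⁻¹ * Bᵀ * S)
    (hlin : μ[X | MeasurableSpace.comap (fun ω => Bᵀ.mulVec (X ω)) inferInstance]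
        =ᵐ[μ] fun ω => Pᵀ.mulVec (X ω))
    (hci : μ[X | MeasurableSpace.comap (fun ω => (Bᵀ.mulVec (X ω), Y ω)) inferInstance]
        =ᵐ[μ] μ[X | MeasurableSpace.comap (fun ω => Bᵀ.mulVec (X ω)) inferInstance]) :
    ∀ᵐ ω ∂μ,
      S⁻¹.mulVec ((μ[X | MeasurableSpace.comap Y inferInstance]) ω
          - fun i => ∫ ω', X ω' i ∂μ)
        = P.mulVec (S⁻¹.mulVec ((μ[X | MeasurableSpace.comap Y inferInstance]) ω
          - fun i => ∫ ω', X ω' i ∂μ)) := by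
  -- basic measurability of the conditioning maps
  have hBXm : Measurable (fun ω => Bᵀ.mulVec (X ω)) := by
    have : Measurable fun v : Fin p → ℝ => Bᵀ.mulVec v :=
      (Bᵀ.mulVecLin.continuous_of_finiteDimensional).measurable
    exact this.comp hXm
  have hmY : MeasurableSpace.comap Y (inferInstance : MeasurableSpace 𝓨)
      ≤ ‹MeasurableSpace Ω› := hYm.comap_le
  have hmB : MeasurableSpace.comap (fun ω => Bᵀ.mulVec (X ω))
      (inferInstance : MeasurableSpace (Fin d → ℝ)) ≤ ‹MeasurableSpace Ω› := hBXm.comap_le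
  have hmBY : MeasurableSpace.comap (fun ω => (Bᵀ.mulVec (X ω), Y ω))
      (inferInstance : MeasurableSpace ((Fin d → ℝ) × 𝓨)) ≤ ‹MeasurableSpace Ω› :=
    (hBXm.prodMk hYm).comap_le
  have hYle : MeasurableSpace.comap Y (inferInstance : MeasurableSpace 𝓨)
      ≤ MeasurableSpace.comap (fun ω => (Bᵀ.mulVec (X ω), Y ω))
        (inferInstance : MeasurableSpace ((Fin d → ℝ) × 𝓨)) := by
    have h : Y = Prod.snd ∘ (fun ω => (Bᵀ.mulVec (X ω), Y ω)) := rfl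
    rw [h, ← MeasurableSpace.comap_comp]
    exact MeasurableSpace.comap_mono measurable_snd.comap_le
  -- integrability of X
  have hXint : Integrable X μ := by
    have hcoord : ∀ i, Integrable (fun ω => X ω i) μ := fun i =>
      (hX2 i).integrable (by norm_num)
    have hbnd : Integrable (fun ω => ∑ i : Fin p, ‖X ω i‖) μ :=
      integrable_finset_sum _ fun i _ => (hcoord i).norm
    refine hbnd.mono' hXm.aestronglyMeasurable ?_
    filter_upwards with ω
    refine (pi_norm_le_iff_of_nonneg
      (Finset.sum_nonneg fun i _ => norm_nonneg _)).2 fun i => ?_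
    exact Finset.single_le_sum (f := fun j => ‖X ω j‖) (fun j _ => norm_nonneg _)
      (Finset.mem_univ i)
  -- the continuous linear map `Pᵀ.mulVec`
  let L : (Fin p → ℝ) →L[ℝ] (Fin p → ℝ) :=
    { Pᵀ.mulVecLin with cont := Pᵀ.mulVecLin.continuous_of_finiteDimensional }
  have hL : ∀ v, L v = Pᵀ.mulVec v := fun v => rfl
  -- Step 1: E[X|Y] = Pᵀ E[X|Y] a.e.
  have hstep : μ[X|MeasurableSpace.comap Y inferInstance]
      =ᵐ[μ] fun ω => Pᵀ.mulVec ((μ[X|MeasurableSpace.comap Y inferInstance]) ω) := by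
    calc μ[X|MeasurableSpace.comap Y inferInstance]
        =ᵐ[μ] μ[μ[X|MeasurableSpace.comap
            (fun ω => (Bᵀ.mulVec (X ω), Y ω)) inferInstance]|MeasurableSpace.comap Y
            inferInstance] := (condExp_condExp_of_le hYle hmBY).symm
      _ =ᵐ[μ] μ[μ[X|MeasurableSpace.comap (fun ω => Bᵀ.mulVec (X ω))
            inferInstance]|MeasurableSpace.comap Y inferInstance] := condExp_congr_ae hci
      _ =ᵐ[μ] μ[(fun ω => L (X ω))|MeasurableSpace.comap Y inferInstance] :=
          condExp_congr_ae hlin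
      _ =ᵐ[μ] fun ω => L ((μ[X|MeasurableSpace.comap Y inferInstance]) ω) :=
          condexp_clm_comm hmY L hXint
  -- expectation vector
  have hEXint : (fun i => ∫ ω', X ω' i ∂μ) = ∫ ω, X ω ∂μ := by
    funext i
    exact ((ContinuousLinearMap.proj i : (Fin p → ℝ) →L[ℝ] ℝ).integral_comp_comm hXint)
  have hEX : (fun i => ∫ ω', X ω' i ∂μ)
      = Pᵀ.mulVec (fun i => ∫ ω', X ω' i ∂μ) := by
    have h1 : ∫ ω, (μ[X|MeasurableSpace.comap (fun ω => Bᵀ.mulVec (X ω)) inferInstance]) ω ∂μ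
        = ∫ ω, X ω ∂μ := integral_condExp hmB
    have h2 : ∫ ω, (μ[X|MeasurableSpace.comap (fun ω => Bᵀ.mulVec (X ω)) inferInstance]) ω ∂μ
        = ∫ ω, L (X ω) ∂μ := integral_congr_ae hlin
    have h3 : ∫ ω, L (X ω) ∂μ = L (∫ ω, X ω ∂μ) := L.integral_comp_comm hXint
    rw [hEXint, ← hL, ← h3, ← h2, h1]
  -- matrix identity
  have hSsymm : Sᵀ = S := by
    rw [hS]; ext i j
    simp only [transpose_apply, Matrix.of_apply]
    congr 1; funext ω; ring
  have hSu : IsUnit S.det := isUnit_iff_ne_zero.mpr (ne_of_gt hSpd.det_pos)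
  have hmat : S⁻¹ * Pᵀ = P * S⁻¹ := by
    rw [hP]; exact key_mat S hSsymm hSu B
  -- conclude
  filter_upwards [hstep] with ω hω
  have hv : (μ[X|MeasurableSpace.comap Y inferInstance]) ω - (fun i => ∫ ω', X ω' i ∂μ)
      = Pᵀ.mulVec ((μ[X|MeasurableSpace.comap Y inferInstance]) ω
        - fun i => ∫ ω', X ω' i ∂μ) := by
    rw [Matrix.mulVec_sub, ← hω, ← hEX]
  conv_lhs => rw [hv]
  rw [Matrix.mulVec_mulVec, hmat, ← Matrix.mulVec_mulVec]
end

section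
/- With the notation of the previous statement, the matrix M = Σₗ Uₗ Uₗᵀ/pₗ − m mᵀ is positive semidefinite almost surely. -/
open Matrix MeasureTheory

private lemma sum_mulVec' {ι n m : Type*} [Fintype n] (s : Finset ι)
    (A : ι → Matrix m n ℝ) (x : n → ℝ) :
    (∑ l ∈ s, A l) *ᵥ x = ∑ l ∈ s, A l *ᵥ x := by
  ext i
  simp only [Matrix.mulVec, dotProduct, Finset.sum_apply, Matrix.sum_apply,
    Finset.sum_mul]
  exact Finset.sum_comm

private lemma dotProduct_sum' {ι n : Type*} [Fintype n] (s : Finset ι)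
    (x : n → ℝ) (v : ι → n → ℝ) :
    x ⬝ᵥ (∑ l ∈ s, v l) = ∑ l ∈ s, x ⬝ᵥ v l := by
  simp only [dotProduct, Finset.sum_apply, Finset.mul_sum]
  exact Finset.sum_comm

private lemma sum_dotProduct' {ι n : Type*} [Fintype n] (s : Finset ι)
    (v : ι → n → ℝ) (x : n → ℝ) :
    (∑ l ∈ s, v l) ⬝ᵥ x = ∑ l ∈ s, v l ⬝ᵥ x := by
  simp only [dotProduct, Finset.sum_apply, Finset.sum_mul]
  exact Finset.sum_comm

private lemma vecMulVec_mulVec' {n : Type*} [Fintype n] (u v x : n → ℝ) :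
    vecMulVec u v *ᵥ x = (v ⬝ᵥ x) • u := by
  ext i
  simp only [Matrix.mulVec, Matrix.vecMulVec_apply, dotProduct, Pi.smul_apply,
    smul_eq_mul, Finset.sum_mul]
  exact Finset.sum_congr rfl fun j _ => by ring

private lemma quad_vecMulVec {n : Type*} [Fintype n] (u x : n → ℝ) :
    x ⬝ᵥ (vecMulVec u u *ᵥ x) = (u ⬝ᵥ x) ^ 2 := by
  rw [vecMulVec_mulVec', dotProduct_smul, smul_eq_mul, sq, dotProduct_comm]

/-- with `pₗ = E[1{Y=l} | W] > 0` a.s., `Uₗ = E[X·1{Y=l} | W]` and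
`m = E[X | W]`, the kernel matrix `M = Σₗ Uₗ Uₗᵀ / pₗ - m mᵀ` is positive
semidefinite almost surely. -/
theorem stmt13 {Ω 𝓦 : Type*} [MeasurableSpace Ω] [MeasurableSpace 𝓦]
    {μ : Measure Ω} [IsProbabilityMeasure μ]
    {p H : ℕ} (X : Ω → Fin p → ℝ) (Y : Ω → ℕ) (W : Ω → 𝓦)
    (hXm : Measurable X) (hYm : Measurable Y) (hWm : Measurable W)
    (hXint : Integrable X μ)
    (hYrange : ∀ ω, Y ω ∈ Finset.Icc 1 H)
    (pfun : ℕ → Ω → ℝ) (U : ℕ → Ω → Fin p → ℝ) (m : Ω → Fin p → ℝ)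
    (hp : ∀ l, pfun l = μ[Set.indicator {ω' | Y ω' = l} (fun _ => (1 : ℝ))
        | MeasurableSpace.comap W inferInstance])
    (hU : ∀ l, U l = μ[fun ω' => Set.indicator {ω'' | Y ω'' = l} (fun _ => (1 : ℝ)) ω' • X ω'
        | MeasurableSpace.comap W inferInstance])
    (hm : m = μ[X | MeasurableSpace.comap W inferInstance])
    (hpos : ∀ l ∈ Finset.Icc 1 H, ∀ᵐ ω ∂μ, 0 < pfun l ω) :
    ∀ᵐ ω ∂μ,
      ((∑ l ∈ Finset.Icc 1 H, (pfun l ω)⁻¹ • vecMulVec (U l ω) (U l ω))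
          - vecMulVec (m ω) (m ω)).PosSemidef := by
  have hmW : MeasurableSpace.comap W inferInstance ≤ ‹MeasurableSpace Ω› := hWm.comap_le
  have hSmeas : ∀ l : ℕ, MeasurableSet {ω' | Y ω' = l} := fun l =>
    hYm (measurableSet_singleton l)
  have hindint : ∀ l : ℕ,
      Integrable (Set.indicator {ω' | Y ω' = l} (fun _ => (1 : ℝ))) μ := fun l =>
    (integrable_const (1 : ℝ)).indicator (hSmeas l)
  have hindX : ∀ l : ℕ,
      (fun ω' => Set.indicator {ω'' | Y ω'' = l} (fun _ => (1 : ℝ)) ω' • X ω')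
        = Set.indicator {ω' | Y ω' = l} X := by
    intro l
    funext ω
    by_cases h : ω ∈ {ω' | Y ω' = l} <;>
      simp [Set.indicator_of_mem, Set.indicator_of_notMem, h]
  have hindXint : ∀ l : ℕ,
      Integrable (fun ω' => Set.indicator {ω'' | Y ω'' = l} (fun _ => (1 : ℝ)) ω' • X ω') μ := by
    intro l
    rw [hindX l]
    exact hXint.indicator (hSmeas l)
  have hsumind : ∀ ω, (∑ l ∈ Finset.Icc 1 H,
      Set.indicator {ω' | Y ω' = l} (fun _ => (1 : ℝ)) ω) = 1 := by
    intro ω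
    simp only [Set.indicator_apply, Set.mem_setOf_eq]
    rw [Finset.sum_ite_eq (Finset.Icc 1 H) (Y ω) (fun _ => (1 : ℝ))]
    exact if_pos (hYrange ω)
  have hpsum : ∀ᵐ ω ∂μ, (∑ l ∈ Finset.Icc 1 H, pfun l ω) = 1 := by
    have h1 : (∑ l ∈ Finset.Icc 1 H,
        Set.indicator {ω' | Y ω' = l} (fun _ => (1 : ℝ))) = fun _ => (1 : ℝ) := by
      funext ω
      rw [Finset.sum_apply]
      exact hsumind ω
    have h2 := condExp_finsetSum (m := MeasurableSpace.comap W inferInstance) (μ := μ)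
      (s := Finset.Icc 1 H)
      (f := fun l => Set.indicator {ω' | Y ω' = l} (fun _ => (1 : ℝ)))
      (fun l _ => hindint l)
    rw [h1] at h2
    rw [condExp_const (μ := μ) hmW (1 : ℝ)] at h2
    filter_upwards [h2] with ω hω
    replace hω := hω.symm
    simp only [hp]
    rw [← Finset.sum_apply ω (Finset.Icc 1 H) (fun l => μ[Set.indicator {ω' | Y ω' = l}
      (fun _ => (1 : ℝ)) | MeasurableSpace.comap W inferInstance])]
    exact hω
  have hUsum : ∀ᵐ ω ∂μ, (∑ l ∈ Finset.Icc 1 H, U l ω) = m ω := by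
    have h1 : (∑ l ∈ Finset.Icc 1 H,
        fun ω' => Set.indicator {ω'' | Y ω'' = l} (fun _ => (1 : ℝ)) ω' • X ω') = X := by
      funext ω
      rw [Finset.sum_apply]
      rw [← Finset.sum_smul, hsumind ω, one_smul]
    have h2 := condExp_finsetSum (m := MeasurableSpace.comap W inferInstance) (μ := μ)
      (s := Finset.Icc 1 H)
      (f := fun l ω' => Set.indicator {ω'' | Y ω'' = l} (fun _ => (1 : ℝ)) ω' • X ω')
      (fun l _ => hindXint l)
    rw [h1] at h2
    filter_upwards [h2.symm] with ω hω
    simp only [hU, hm]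
    rw [← Finset.sum_apply ω (Finset.Icc 1 H) (fun l =>
      μ[fun ω' => Set.indicator {ω'' | Y ω'' = l} (fun _ => (1 : ℝ)) ω' • X ω'
        | MeasurableSpace.comap W inferInstance])]
    exact hω
  have hposall : ∀ᵐ ω ∂μ, ∀ l ∈ Finset.Icc 1 H, 0 < pfun l ω :=
    (Finset.eventually_all (Finset.Icc 1 H)).mpr hpos
  filter_upwards [hpsum, hUsum, hposall] with ω hωp hωU hωpos
  rw [Matrix.posSemidef_iff_dotProduct_mulVec]
  constructor
  · -- Hermitian
    ext i j
    simp only [Matrix.conjTranspose_apply, Matrix.sub_apply, Matrix.sum_apply,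
      Matrix.smul_apply, Matrix.vecMulVec_apply, smul_eq_mul, star_trivial]
    congr 1
    · exact Finset.sum_congr rfl fun l _ => by ring
    · exact mul_comm _ _
  · intro x
    have hstar : star x = x := by funext i; simp
    rw [hstar, Matrix.sub_mulVec, dotProduct_sub, sum_mulVec' (Finset.Icc 1 H) _ x,
      dotProduct_sum']
    have hterm : ∀ l ∈ Finset.Icc 1 H,
        x ⬝ᵥ (((pfun l ω)⁻¹ • vecMulVec (U l ω) (U l ω)) *ᵥ x)
          = (U l ω ⬝ᵥ x) ^ 2 / pfun l ω := by
      intro l hl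
      rw [Matrix.smul_mulVec, dotProduct_smul, quad_vecMulVec]
      simp [div_eq_inv_mul]
    rw [Finset.sum_congr rfl hterm, quad_vecMulVec]
    rw [sub_nonneg, ← hωU]
    have key := Finset.sq_sum_div_le_sum_sq_div (Finset.Icc 1 H) (fun l => U l ω ⬝ᵥ x)
      (g := fun l => pfun l ω) hωpos
    rw [hωp, div_one] at key
    calc ((∑ l ∈ Finset.Icc 1 H, U l ω) ⬝ᵥ x) ^ 2
        = (∑ l ∈ Finset.Icc 1 H, U l ω ⬝ᵥ x) ^ 2 := by rw [sum_dotProduct']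
      _ ≤ _ := key
end
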